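/- Let H be a complex separable Hilbert space, let M be a POV measure on a measurable space (X, 𝒜), let P be a PV measure on a measurable space (Y, ℬ), and let ν be a weak Markov kernel with respect to M such that P = ν∘M. For B ∈ ℬ put π(B) := {x ∈ X : ν(x, B) = 1} (a measurable subset of X). Then for every B ∈ ℬ one has P(B) = M(π(B)), P(Y∖B) = M(π(Y∖B)) = M(X∖π(B)). -/

import Mathlib

open MeasureTheory ComplexOrder
open scoped Classical

noncomputable section

variable {H : Type*} [NormedAddCommGroup H] [InnerProductSpace ℂ H] [CompleteSpace H]

/-- A (normalized) positive operator valued measure on the measurable space `X`: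
`0 ≤ M A ≤ 1`, `M ∅ = 0`, `M univ = 1`, and `M` is weakly σ-additive. -/
structure IsPOVM {X : Type*} [MeasurableSpace X] (M : Set X → (H →L[ℂ] H)) : Prop where
  pos : ∀ A : Set X, MeasurableSet A → (M A).IsPositive
  le_one : ∀ A : Set X, MeasurableSet A → ((1 : H →L[ℂ] H) - M A).IsPositive
  empty : M ∅ = 0
  univ : M Set.univ = 1
  m_iUnion : ∀ (ψ : H) (A : ℕ → Set X), (∀ n, MeasurableSet (A n)) →
    Pairwise (Function.onFun Disjoint A) →
    HasSum (fun n => (inner ℂ ψ (M (A n) ψ) : ℂ)) (inner ℂ ψ (M (⋃ n, A n) ψ))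

/-- A projection valued (PV) measure: a POV measure whose values are orthogonal
projections (self-adjointness is part of positivity). -/
def IsPVM {X : Type*} [MeasurableSpace X] (M : Set X → (H →L[ℂ] H)) : Prop :=
  IsPOVM M ∧ ∀ A : Set X, MeasurableSet A → M A * M A = M A

/-- The finite measure `μ_ψ^M (A) = ⟨ψ, M(A) ψ⟩` associated to a POV measure `M`
and a vector `ψ`. (Junk value `0` if `M` is not a POV measure.) -/
def vecMeasure {X : Type*} [MeasurableSpace X] (M : Set X → (H →L[ℂ] H)) (ψ : H) :
    Measure X :=
  if hM : IsPOVM M then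
    Measure.ofMeasurable (fun A _ => ENNReal.ofReal (inner ℂ ψ (M A ψ) : ℂ).re)
      (by simp [hM.empty])
      (by
        intro A hA hd
        have h := hM.m_iUnion ψ A hA hd
        have hre : HasSum (fun n => ((inner ℂ ψ (M (A n) ψ) : ℂ)).re)
            ((inner ℂ ψ (M (⋃ n, A n) ψ) : ℂ)).re := h.mapL Complex.reCLM
        have hnn : ∀ n, 0 ≤ ((inner ℂ ψ (M (A n) ψ) : ℂ)).re := by
          intro n
          have h2 := (hM.pos (A n) (hA n)).2 ψ
          rw [ContinuousLinearMap.reApplyInnerSelf] at h2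
          simpa [inner_re_symm] using h2
        rw [← hre.tsum_eq]
        exact ENNReal.ofReal_tsum_of_nonneg hnn hre.summable)
  else 0

/-- `ν : X × ℬ → ℝ` is a weak Markov kernel with respect to the POV measure `M`. -/
def IsWeakMarkovKernel {X Y : Type*} [MeasurableSpace X] [MeasurableSpace Y]
    (M : Set X → (H →L[ℂ] H)) (ν : X → Set Y → ℝ) : Prop :=
  (∀ B : Set Y, MeasurableSet B → Measurable fun x => ν x B) ∧
  ∀ ψ : H,
    (∀ B : Set Y, MeasurableSet B →
      ∀ᵐ x ∂(vecMeasure M ψ), 0 ≤ ν x B ∧ ν x B ≤ 1) ∧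
    (∀ᵐ x ∂(vecMeasure M ψ), ν x Set.univ = 1) ∧
    (∀ᵐ x ∂(vecMeasure M ψ), ν x ∅ = 0) ∧
    (∀ B : ℕ → Set Y, (∀ n, MeasurableSet (B n)) → Pairwise (Function.onFun Disjoint B) →
      ∀ᵐ x ∂(vecMeasure M ψ), HasSum (fun n => ν x (B n)) (ν x (⋃ n, B n)))

/-- `F = ν ∘ M` : the POV measure `F` is the smearing of `M` with respect to `ν`. -/
def IsSmearing {X Y : Type*} [MeasurableSpace X] [MeasurableSpace Y]
    (M : Set X → (H →L[ℂ] H)) (ν : X → Set Y → ℝ) (F : Set Y → (H →L[ℂ] H)) : Prop :=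
  ∀ B : Set Y, MeasurableSet B → ∀ ψ : H,
    (inner ℂ ψ (F B ψ) : ℂ) = ((∫ x, ν x B ∂(vecMeasure M ψ) : ℝ) : ℂ)

/-- A weak Markov kernel has values in `{0,1}`. -/
def HasZeroOneValues {X Y : Type*} [MeasurableSpace X] [MeasurableSpace Y]
    (M : Set X → (H →L[ℂ] H)) (ν : X → Set Y → ℝ) : Prop :=
  ∀ B : Set Y, MeasurableSet B → ∀ ψ : H,
    ∀ᵐ x ∂(vecMeasure M ψ), ν x B = 0 ∨ ν x B = 1



section Aux

variable {X : Type*} [MeasurableSpace X] {M : Set X → (H →L[ℂ] H)}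

lemma inner_pos_real {T : H →L[ℂ] H} (hT : T.IsPositive) (ψ : H) :
    (inner ℂ ψ (T ψ) : ℂ) = (((inner ℂ ψ (T ψ) : ℂ).re : ℝ) : ℂ) := by
  have hsymm := ContinuousLinearMap.isSelfAdjoint_iff_isSymmetric.mp hT.isSelfAdjoint
  have hreal : (starRingEnd ℂ) (inner ℂ ψ (T ψ) : ℂ) = (inner ℂ ψ (T ψ) : ℂ) := by
    rw [inner_conj_symm]
    exact hsymm ψ ψ
  exact (Complex.conj_eq_iff_re.mp hreal).symm

lemma inner_pos_re_nonneg {T : H →L[ℂ] H} (hT : T.IsPositive) (ψ : H) :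
    0 ≤ (inner ℂ ψ (T ψ) : ℂ).re := by
  have h2 := hT.2 ψ
  rw [ContinuousLinearMap.reApplyInnerSelf] at h2
  simpa [inner_re_symm] using h2

lemma clm_ext_inner {S T : H →L[ℂ] H}
    (h : ∀ ψ : H, (inner ℂ ψ (S ψ) : ℂ) = inner ℂ ψ (T ψ)) : S = T := by
  have hl : (S : H →ₗ[ℂ] H) = (T : H →ₗ[ℂ] H) := by
    rw [← ext_inner_map]
    intro x
    rw [← inner_conj_symm, show ((S : H →ₗ[ℂ] H) x) = S x from rfl, h x,
      show ((T : H →ₗ[ℂ] H) x) = T x from rfl, inner_conj_symm]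
  exact ContinuousLinearMap.coe_injective hl

lemma vecMeasure_apply (hM : IsPOVM M) (ψ : H) {A : Set X} (hA : MeasurableSet A) :
    vecMeasure M ψ A = ENNReal.ofReal (inner ℂ ψ (M A ψ) : ℂ).re := by
  rw [vecMeasure, dif_pos hM]
  exact Measure.ofMeasurable_apply A hA

lemma vecMeasure_toReal (hM : IsPOVM M) (ψ : H) {A : Set X} (hA : MeasurableSet A) :
    (vecMeasure M ψ A).toReal = (inner ℂ ψ (M A ψ) : ℂ).re := by
  rw [vecMeasure_apply hM ψ hA,
    ENNReal.toReal_ofReal (inner_pos_re_nonneg (hM.pos A hA) ψ)]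

lemma vecMeasure_finite (M : Set X → (H →L[ℂ] H)) (ψ : H) :
    IsFiniteMeasure (vecMeasure M ψ) := by
  constructor
  by_cases hM : IsPOVM M
  · rw [vecMeasure_apply hM ψ MeasurableSet.univ]
    exact ENNReal.ofReal_lt_top
  · simp [vecMeasure, dif_neg hM]

lemma vecMeasure_add_null (hM : IsPOVM M) {χ φ : H} {A : Set X} (hA : MeasurableSet A)
    (hχ : vecMeasure M χ A = 0) (hφ : vecMeasure M φ A = 0) :
    vecMeasure M (χ + φ) A = 0 := by
  have hpos := hM.pos A hA
  have hχ0 : (inner ℂ χ (M A χ) : ℂ).re = 0 := by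
    rw [vecMeasure_apply hM χ hA] at hχ
    have := ENNReal.ofReal_eq_zero.mp hχ
    linarith [inner_pos_re_nonneg hpos χ]
  have hφ0 : (inner ℂ φ (M A φ) : ℂ).re = 0 := by
    rw [vecMeasure_apply hM φ hA] at hφ
    have := ENNReal.ofReal_eq_zero.mp hφ
    linarith [inner_pos_re_nonneg hpos φ]
  have key : (inner ℂ (χ + φ) (M A (χ + φ)) : ℂ) + inner ℂ (χ - φ) (M A (χ - φ)) =
      2 * inner ℂ χ (M A χ) + 2 * inner ℂ φ (M A φ) := by
    simp only [map_add, map_sub, inner_add_left, inner_add_right, inner_sub_left,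
      inner_sub_right]
    ring
  have hre : (inner ℂ (χ + φ) (M A (χ + φ)) : ℂ).re + (inner ℂ (χ - φ) (M A (χ - φ)) : ℂ).re =
      2 * (inner ℂ χ (M A χ) : ℂ).re + 2 * (inner ℂ φ (M A φ) : ℂ).re := by
    have h := congrArg Complex.re key
    simpa [Complex.add_re, Complex.mul_re] using h
  rw [vecMeasure_apply hM _ hA, ENNReal.ofReal_eq_zero]
  have h1 := inner_pos_re_nonneg hpos (χ - φ)
  linarith

lemma integrable_bdd {f : X → ℝ} (hf : Measurable f) (μ : Measure X) [IsFiniteMeasure μ]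
    (hb : ∀ᵐ x ∂μ, 0 ≤ f x ∧ f x ≤ 1) : Integrable f μ :=
  (integrable_const 1).mono' hf.aestronglyMeasurable
    (hb.mono fun x hx => by rw [Real.norm_eq_abs, abs_le]; constructor <;> linarith [hx.1, hx.2])

lemma kernel_compl_add {Y : Type*} [MeasurableSpace Y] {ν : X → Set Y → ℝ}
    (hν : IsWeakMarkovKernel M ν) (ψ : H) {B : Set Y} (hB : MeasurableSet B) :
    ∀ᵐ x ∂(vecMeasure M ψ), ν x B + ν x Bᶜ = 1 := by
  obtain ⟨hbd, huniv, hempty, hadd⟩ := hν.2 ψ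
  set B' : ℕ → Set Y := fun n => if n = 0 then B else if n = 1 then Bᶜ else ∅ with hB'def
  have hBm : ∀ n, MeasurableSet (B' n) := by
    intro n
    simp only [B']
    split_ifs
    · exact hB
    · exact hB.compl
    · exact MeasurableSet.empty
  have hdisj : Pairwise (Function.onFun Disjoint B') := by
    intro m n hmn
    rcases eq_or_ne m 0 with rfl | hm0
    · rcases eq_or_ne n 1 with rfl | hn1
      · simpa [Function.onFun, B'] using disjoint_compl_right
      · simp [Function.onFun, B', hmn.symm, hn1]
    · rcases eq_or_ne m 1 with rfl | hm1
      · rcases eq_or_ne n 0 with rfl | hn0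
        · simpa [Function.onFun, B'] using disjoint_compl_left
        · simp [Function.onFun, B', hmn.symm, hn0]
      · simp [Function.onFun, B', hm0, hm1]
  have hU : ⋃ n, B' n = Set.univ := by
    apply Set.eq_univ_of_forall
    intro y
    by_cases hy : y ∈ B
    · exact Set.mem_iUnion.mpr ⟨0, by simp [B', hy]⟩
    · exact Set.mem_iUnion.mpr ⟨1, by simp [B', hy]⟩
  filter_upwards [huniv, hempty, hadd B' hBm hdisj] with x h1 h0 hsum
  rw [hU, h1] at hsum
  have h2 : HasSum (fun n => ν x (B' n)) (ν x B + ν x Bᶜ) := by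
    have hz : ∀ n ∉ ({0, 1} : Finset ℕ), ν x (B' n) = 0 := by
      intro n hn
      simp only [Finset.mem_insert, Finset.mem_singleton, not_or] at hn
      simp [B', hn.1, hn.2, h0]
    have := hasSum_sum_of_ne_finset_zero (f := fun n => ν x (B' n)) (L := SummationFilter.unconditional ℕ) hz
    rwa [Finset.sum_pair (by norm_num : (0 : ℕ) ≠ 1),
      show B' 0 = B by simp [B'], show B' 1 = Bᶜ by simp [B']] at this
  exact h2.unique hsum

end Aux

lemma key_lemma {X Y : Type*} [MeasurableSpace X] [MeasurableSpace Y]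
    (M : Set X → (H →L[ℂ] H)) (hM : IsPOVM M)
    (P : Set Y → (H →L[ℂ] H)) (hP : IsPVM P)
    (ν : X → Set Y → ℝ) (hν : IsWeakMarkovKernel M ν) (hs : IsSmearing M ν P)
    {B : Set Y} (hB : MeasurableSet B) :
    (∀ ψ : H, ∀ᵐ x ∂(vecMeasure M ψ), ν x B = 0 ∨ ν x B = 1) ∧
    P B = M {x : X | ν x B = 1} := by
  set f : X → ℝ := fun x => ν x B with hfdef
  have hfm : Measurable f := hν.1 B hB
  have hπ : MeasurableSet {x : X | f x = 1} := hfm (measurableSet_singleton 1)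
  have h01 : ∀ ψ : H, ∀ᵐ x ∂(vecMeasure M ψ), ν x B = 0 ∨ ν x B = 1 := by
    intro ψ
    set χ : H := P B ψ with hχdef
    set φ : H := ψ - P B ψ with hφdef
    haveI := vecMeasure_finite M χ
    haveI := vecMeasure_finite M φ
    have hPBχ : P B χ = χ := by
      rw [hχdef, ← ContinuousLinearMap.mul_apply, hP.2 B hB]
    have hPBφ : P B φ = 0 := by
      rw [hφdef, map_sub, ← ContinuousLinearMap.mul_apply, hP.2 B hB, sub_self]
    have hχbd := (hν.2 χ).1 B hB
    have hφbd := (hν.2 φ).1 B hB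
    have hχint : Integrable f (vecMeasure M χ) := integrable_bdd hfm _ hχbd
    -- f = 1 a.e. w.r.t. μ_χ
    have hfχ : ∀ᵐ x ∂(vecMeasure M χ), f x = 1 := by
      have hι := hs B hB χ
      rw [hPBχ] at hι
      have hint : ∫ x, f x ∂(vecMeasure M χ) = (inner ℂ χ χ : ℂ).re := by
        have := congrArg Complex.re hι
        simpa using this.symm
      have hone : ∫ x, (1 : ℝ) ∂(vecMeasure M χ) = (inner ℂ χ χ : ℂ).re := by
        rw [integral_const, smul_eq_mul, mul_one, measureReal_def, vecMeasure_toReal hM χ MeasurableSet.univ,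
          hM.univ]
        simp
      have hzero : ∫ x, (1 - f x) ∂(vecMeasure M χ) = 0 := by
        rw [integral_sub (integrable_const 1) hχint, hone, hint, sub_self]
      have hnn : 0 ≤ᵐ[vecMeasure M χ] fun x => 1 - f x := by
        filter_upwards [hχbd] with x hx
        simp only [Pi.zero_apply]
        linarith [hx.2]
      have := (integral_eq_zero_iff_of_nonneg_ae hnn
        ((integrable_const 1).sub hχint)).mp hzero
      filter_upwards [this] with x hx
      simp only [Pi.zero_apply] at hx
      linarith
    -- f = 0 a.e. w.r.t. μ_φ
    have hfφ : ∀ᵐ x ∂(vecMeasure M φ), f x = 0 := by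
      have hι := hs B hB φ
      rw [hPBφ] at hι
      have hφint : Integrable f (vecMeasure M φ) := integrable_bdd hfm _ hφbd
      have hzero : ∫ x, f x ∂(vecMeasure M φ) = 0 := by
        have := congrArg Complex.re hι
        simpa using this.symm
      have hnn : 0 ≤ᵐ[vecMeasure M φ] f := by
        filter_upwards [hφbd] with x hx using hx.1
      have := (integral_eq_zero_iff_of_nonneg_ae hnn hφint).mp hzero
      filter_upwards [this] with x hx
      simpa using hx
    -- combine
    have hN : MeasurableSet {x : X | ¬(f x = 0 ∨ f x = 1)} := by
      have : MeasurableSet {x : X | f x = 0 ∨ f x = 1} :=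
        (hfm (measurableSet_singleton 0)).union (hfm (measurableSet_singleton 1))
      simpa [Set.compl_setOf] using this.compl
    have hχN : vecMeasure M χ {x : X | ¬(f x = 0 ∨ f x = 1)} = 0 := by
      refine measure_mono_null ?_ (ae_iff.mp hfχ)
      intro x hx
      simp only [Set.mem_setOf_eq, not_or] at hx ⊢
      exact hx.2
    have hφN : vecMeasure M φ {x : X | ¬(f x = 0 ∨ f x = 1)} = 0 := by
      refine measure_mono_null ?_ (ae_iff.mp hfφ)
      intro x hx
      simp only [Set.mem_setOf_eq, not_or] at hx ⊢
      exact hx.1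
    have hψeq : χ + φ = ψ := by rw [hχdef, hφdef]; abel
    have := vecMeasure_add_null hM hN hχN hφN
    rw [hψeq] at this
    exact ae_iff.mpr this
  refine ⟨h01, ?_⟩
  apply clm_ext_inner
  intro ψ
  haveI := vecMeasure_finite M ψ
  have hψbd := (hν.2 ψ).1 B hB
  have heqind : f =ᵐ[vecMeasure M ψ] Set.indicator {x : X | f x = 1} (fun _ => (1 : ℝ)) := by
    filter_upwards [h01 ψ] with x hx
    rcases hx with hx | hx
    · have hxm : x ∉ {x : X | f x = 1} := by
        simp only [hfdef, Set.mem_setOf_eq, hx]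
        norm_num
      rw [Set.indicator_of_notMem hxm]
      simpa only [hfdef] using hx
    · have hxm : x ∈ {x : X | f x = 1} := by
        simp only [hfdef, Set.mem_setOf_eq, hx]
      rw [Set.indicator_of_mem hxm]
      simpa only [hfdef] using hx
  have hιψ := hs B hB ψ
  rw [hιψ, integral_congr_ae heqind, integral_indicator hπ, setIntegral_const,
    smul_eq_mul, mul_one, measureReal_def, vecMeasure_toReal hM ψ hπ]
  exact (inner_pos_real (hM.pos _ hπ) ψ).symm

/-- If `P = ν ∘ M` with `P` a PV measure, then with
`π(B) := {x : ν(x,B) = 1}` one has `P(B) = M(π(B))` and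
`P(Bᶜ) = M(π(Bᶜ)) = M(π(B)ᶜ)`. -/
theorem pv_smearing_eq_on_level_sets
    [TopologicalSpace.SeparableSpace H]
    {X Y : Type*} [MeasurableSpace X] [MeasurableSpace Y]
    (M : Set X → (H →L[ℂ] H)) (hM : IsPOVM M)
    (P : Set Y → (H →L[ℂ] H)) (hP : IsPVM P)
    (ν : X → Set Y → ℝ) (hν : IsWeakMarkovKernel M ν) (hs : IsSmearing M ν P) :
    ∀ B : Set Y, MeasurableSet B →
      P B = M {x : X | ν x B = 1} ∧
      P Bᶜ = M {x : X | ν x Bᶜ = 1} ∧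
      M {x : X | ν x Bᶜ = 1} = M ({x : X | ν x B = 1}ᶜ) := by
  intro B hB
  obtain ⟨h01, hPB⟩ := key_lemma M hM P hP ν hν hs hB
  obtain ⟨h01c, hPBc⟩ := key_lemma M hM P hP ν hν hs hB.compl
  refine ⟨hPB, hPBc, ?_⟩
  have hπc : MeasurableSet {x : X | ν x Bᶜ = 1} :=
    (hν.1 Bᶜ hB.compl) (measurableSet_singleton 1)
  have hπ : MeasurableSet {x : X | ν x B = 1} :=
    (hν.1 B hB) (measurableSet_singleton 1)
  apply clm_ext_inner
  intro ψ
  have hmeq : vecMeasure M ψ {x : X | ν x Bᶜ = 1} = vecMeasure M ψ ({x : X | ν x B = 1}ᶜ) := by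
    apply measure_congr
    rw [Filter.eventuallyEq_set]
    filter_upwards [h01 ψ, h01c ψ, kernel_compl_add hν ψ hB] with x hx hxc hadd
    simp only [Set.mem_setOf_eq, Set.mem_compl_iff]
    constructor
    · intro h1 h2
      rw [h1, h2] at hadd
      norm_num at hadd
    · intro h1
      rcases hxc with h | h
      · rcases hx with h' | h'
        · rw [h, h'] at hadd; norm_num at hadd
        · exact absurd h' h1
      · exact h
  rw [inner_pos_real (hM.pos _ hπc) ψ, inner_pos_real (hM.pos _ hπ.compl) ψ,
    ← vecMeasure_toReal hM ψ hπc, ← vecMeasure_toReal hM ψ hπ.compl, hmeq]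

end
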